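/- arXiv:1801.04548 — 5 statements merged into one kernel-verified Lean document; each statement's English description precedes it below -/
import Mathlib

section
/- For any m-by-n complex matrix F with unit-norm columns, equality (1/n)·tr((FF')^d) = (n/m)^(d-1) holds for some d ≥ 2 if and only if FF' = (n/m)·I_m (F is a uniform tight frame). -/
open Matrix BigOperators

lemma trace_pow_eq_sum_eig {k : ℕ} (A : Matrix (Fin k) (Fin k) ℂ)
    (hA : A.IsHermitian) (d : ℕ) :
    Matrix.trace (A ^ d) = ∑ i, ((hA.eigenvalues i : ℂ)) ^ d := by
  set V : Matrix (Fin k) (Fin k) ℂ := (hA.eigenvectorUnitary : Matrix (Fin k) (Fin k) ℂ)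
  have hVsV : star V * V = 1 := (Matrix.mem_unitaryGroup_iff').mp hA.eigenvectorUnitary.2
  have hVVs : V * star V = 1 := (Matrix.mem_unitaryGroup_iff).mp hA.eigenvectorUnitary.2
  set D : Matrix (Fin k) (Fin k) ℂ := Matrix.diagonal (RCLike.ofReal ∘ hA.eigenvalues)
  have hspec : A = V * D * star V := hA.spectral_theorem
  have hpow : A ^ d = V * D ^ d * star V := by
    induction d with
    | zero => simp [pow_zero, hVVs]
    | succ d ih =>
        rw [pow_succ, ih, hspec, pow_succ]
        simp only [Matrix.mul_assoc]
        rw [← Matrix.mul_assoc (star V) V (D * star V), hVsV, Matrix.one_mul]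
  rw [hpow, Matrix.trace_mul_cycle, hVsV, Matrix.one_mul,
    Matrix.diagonal_pow, Matrix.trace_diagonal]
  simp

theorem erasure_welch_stmt1 (m n : ℕ) (hm : 1 ≤ m) (hmn : m ≤ n)
    (F : Matrix (Fin m) (Fin n) ℂ)
    (hcol : ∀ i, (Fᴴ * F) i i = 1) :
    (∃ d : ℕ, 2 ≤ d ∧
      (1 / (n : ℝ)) * (Matrix.trace ((F * Fᴴ) ^ d)).re = ((n : ℝ) / m) ^ (d - 1)) ↔
    F * Fᴴ = ((n : ℂ) / (m : ℂ)) • (1 : Matrix (Fin m) (Fin m) ℂ) := by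
  have hm0 : (m : ℝ) ≠ 0 := by positivity
  have hn1 : 1 ≤ n := le_trans hm hmn
  have hn0 : (n : ℝ) ≠ 0 := by positivity
  have hG : (F * Fᴴ).IsHermitian := Matrix.isHermitian_mul_conjTranspose_self F
  set lam := hG.eigenvalues with hlam
  have hnonneg : ∀ i, 0 ≤ lam i := Matrix.eigenvalues_self_mul_conjTranspose_nonneg F
  have htr : Matrix.trace (F * Fᴴ) = (n : ℂ) := by
    rw [Matrix.trace_mul_comm, Matrix.trace]
    simp only [Matrix.diag_apply]
    rw [Finset.sum_congr rfl (fun i _ => hcol i)]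
    simp
  have hsum : ∑ i, lam i = (n : ℝ) := by
    have h1 := trace_pow_eq_sum_eig (F * Fᴴ) hG 1
    rw [pow_one, htr] at h1
    simp only [pow_one] at h1
    exact_mod_cast h1.symm
  have htrpow : ∀ d : ℕ, (Matrix.trace ((F * Fᴴ) ^ d)).re = ∑ i, lam i ^ d := by
    intro d
    rw [trace_pow_eq_sum_eig (F * Fᴴ) hG d]
    simp only [← Complex.ofReal_pow, ← Complex.ofReal_sum, Complex.ofReal_re]
    rfl
  constructor
  · rintro ⟨d, hd2, heq⟩
    rw [htrpow d] at heq
    have hw : ∀ i ∈ (Finset.univ : Finset (Fin m)), (0:ℝ) < (1 : ℝ)/m := by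
      intro i _; positivity
    have hw1 : ∑ _i ∈ (Finset.univ : Finset (Fin m)), (1:ℝ)/m = 1 := by
      rw [Finset.sum_const, Finset.card_univ, Fintype.card_fin]
      rw [nsmul_eq_mul, mul_one_div_cancel hm0]
    have hmem : ∀ i ∈ (Finset.univ : Finset (Fin m)), lam i ∈ Set.Ici (0:ℝ) :=
      fun i _ => hnonneg i
    have hsumpow : ∑ i, lam i ^ d = (n:ℝ) * ((n:ℝ)/m) ^ (d-1) := by
      rw [← heq]; field_simp
    have havg : ∑ i, ((1:ℝ)/m) • lam i = (n : ℝ)/m := by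
      simp only [smul_eq_mul]
      rw [← Finset.mul_sum, hsum]; ring
    have hle : ∑ i, ((1:ℝ)/m) • (fun x : ℝ => x ^ d) (lam i)
        ≤ (fun x : ℝ => x ^ d) (∑ i, ((1:ℝ)/m) • lam i) := by
      simp only [smul_eq_mul]
      rw [← Finset.mul_sum, hsumpow]
      have h2 : ∑ i, 1/(m:ℝ) * lam i = (n:ℝ)/m := havg
      rw [h2]
      have hd : ((n:ℝ)/m)^d = ((n:ℝ)/m)^(d-1) * ((n:ℝ)/m) := by
        rw [← pow_succ]; congr 1; omega
      rw [hd]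
      apply le_of_eq
      field_simp
    have hconst := (strictConvexOn_pow hd2).eq_of_le_map_sum hw hw1 hmem hle
    have hall : ∀ i, lam i = (n:ℝ)/m := by
      intro i
      set i0 : Fin m := ⟨0, by omega⟩
      have hic : ∀ j, lam j = lam i0 := fun j =>
        hconst (Finset.mem_univ j) (Finset.mem_univ i0)
      have hs : (m:ℝ) * lam i0 = n := by
        rw [← hsum, Finset.sum_congr rfl (fun j _ => hic j), Finset.sum_const,
          Finset.card_univ, Fintype.card_fin, nsmul_eq_mul]
      rw [hic i]
      field_simp
      linarith
    have hdiag : Matrix.diagonal (RCLike.ofReal ∘ lam) =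
        ((n : ℂ)/m) • (1 : Matrix (Fin m) (Fin m) ℂ) := by
      ext i j
      rcases eq_or_ne i j with rfl | h
      · simp [Matrix.diagonal_apply_eq, Matrix.one_apply_eq, hall i]
      · simp [Matrix.diagonal_apply_ne _ h, Matrix.one_apply_ne h]
    have hspec := hG.spectral_theorem
    rw [hdiag] at hspec
    rw [hspec, map_smul, map_one]
  · intro h
    refine ⟨2, le_refl 2, ?_⟩
    rw [h]
    have h2 : (((n : ℂ) / m) • (1 : Matrix (Fin m) (Fin m) ℂ)) ^ 2
        = (((n:ℂ)/m)^2) • (1 : Matrix (Fin m) (Fin m) ℂ) := by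
      rw [smul_pow, one_pow]
    rw [h2, Matrix.trace_smul, Matrix.trace_one]
    have hre : ((((n:ℂ)/m)^2) • (Fintype.card (Fin m) : ℂ)).re = ((n:ℝ)/m)^2 * m := by
      have hc : ((n:ℂ)/m) = (((n:ℝ)/(m:ℝ) : ℝ) : ℂ) := by push_cast; ring
      rw [smul_eq_mul, hc, ← Complex.ofReal_pow, Fintype.card_fin,
        ← Complex.ofReal_natCast, ← Complex.ofReal_mul, Complex.ofReal_re]
    rw [hre]
    field_simp
    rw [show (2:ℕ) - 1 = 1 from rfl, pow_one]
    field_simp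
end

section
/- For any m-by-n complex matrix F with unit-norm columns, the sum over all ordered pairs i≠j of |⟨f_i, f_j⟩|² is at least n²/m − n, with equality if and only if FF' = (n/m)·I_m. -/
open Matrix BigOperators Finset

theorem erasure_welch_stmt2 (m n : ℕ) (hm : 1 ≤ m) (hmn : m ≤ n)
    (F : Matrix (Fin m) (Fin n) ℂ)
    (hcol : ∀ i, (Fᴴ * F) i i = 1) :
    ((n : ℝ) ^ 2 / m - n ≤ ∑ i, ∑ j ∈ Finset.univ.erase i, ‖(Fᴴ * F) i j‖ ^ 2) ∧
    ((∑ i, ∑ j ∈ Finset.univ.erase i, ‖(Fᴴ * F) i j‖ ^ 2 = (n : ℝ) ^ 2 / m - n) ↔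
      F * Fᴴ = ((n : ℂ) / (m : ℂ)) • (1 : Matrix (Fin m) (Fin m) ℂ)) := by
  have hm0 : (0:ℝ) < m := by exact_mod_cast hm
  set G := Fᴴ * F with hGdef
  set A := F * Fᴴ with hAdef
  set c : ℝ := n / m with hcdef
  have hcC : ((n : ℂ) / (m : ℂ)) = (c : ℂ) := by
    rw [hcdef]; push_cast; ring
  set B := A - ((n:ℂ)/(m:ℂ)) • (1 : Matrix (Fin m) (Fin m) ℂ) with hBdef
  -- Hermitian facts
  have hGh : Gᴴ = G := isHermitian_conjTranspose_mul_self F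
  have hAh : Aᴴ = A := isHermitian_mul_conjTranspose_self F
  have hGsym : ∀ i j, G j i = (starRingEnd ℂ) (G i j) := by
    intro i j
    conv_lhs => rw [← hGh]
    simp [conjTranspose_apply]
  have hAsym : ∀ a b, A b a = (starRingEnd ℂ) (A a b) := by
    intro a b
    conv_lhs => rw [← hAh]
    simp [conjTranspose_apply]
  -- trace of A is n
  have htrA : Matrix.trace A = (n : ℂ) := by
    rw [hAdef, Matrix.trace_mul_comm, ← hGdef]
    simp [Matrix.trace, Matrix.diag, hcol]
  -- sum of real parts of diagonal of A
  have hdiagA : ∀ a, A a a = ((A a a).re : ℂ) := by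
    intro a
    exact (Complex.conj_eq_iff_re.mp (hAsym a a).symm).symm
  have hsumre : ∑ a, (A a a).re = (n : ℝ) := by
    have := congrArg Complex.re htrA
    simpa [Matrix.trace, Matrix.diag, Complex.re_sum] using this
  -- Step A: full sums agree
  have keyA : ∑ i, ∑ j, ‖G i j‖ ^ 2 = ∑ a, ∑ b, ‖A a b‖ ^ 2 := by
    have h1 : ((∑ i, ∑ j, ‖G i j‖ ^ 2 : ℝ) : ℂ) = Matrix.trace (G * G) := by
      rw [Matrix.trace]
      push_cast
      rw [Finset.sum_congr rfl (fun i _ => ?_)]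
      simp only [Matrix.diag, Matrix.mul_apply]
      refine Finset.sum_congr rfl (fun j _ => ?_)
      rw [hGsym i j, RCLike.mul_conj]
      norm_num
    have h2 : ((∑ a, ∑ b, ‖A a b‖ ^ 2 : ℝ) : ℂ) = Matrix.trace (A * A) := by
      rw [Matrix.trace]
      push_cast
      rw [Finset.sum_congr rfl (fun a _ => ?_)]
      simp only [Matrix.diag, Matrix.mul_apply]
      refine Finset.sum_congr rfl (fun b _ => ?_)
      rw [hAsym a b, RCLike.mul_conj]
      norm_num
    have h3 : Matrix.trace (G * G) = Matrix.trace (A * A) := by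
      rw [hGdef, hAdef]
      calc Matrix.trace ((Fᴴ * F) * (Fᴴ * F))
          = Matrix.trace (Fᴴ * (F * (Fᴴ * F))) := by rw [Matrix.mul_assoc]
        _ = Matrix.trace ((F * (Fᴴ * F)) * Fᴴ) := by rw [Matrix.trace_mul_comm]
        _ = Matrix.trace ((F * Fᴴ) * (F * Fᴴ)) := by
            rw [← Matrix.mul_assoc, ← Matrix.mul_assoc]
    have := h1.trans (h3.trans h2.symm)
    exact_mod_cast this
  -- Step B: pointwise decomposition
  have keyB : ∀ a b, ‖A a b‖ ^ 2 = ‖B a b‖ ^ 2 +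
      (if a = b then 2 * c * (A a a).re - c ^ 2 else 0) := by
    intro a b
    by_cases hab : a = b
    · subst hab
      set r := (A a a).re with hr
      have hB : B a a = ((r - c : ℝ) : ℂ) := by
        rw [hBdef]
        simp only [Matrix.sub_apply, Matrix.smul_apply, Matrix.one_apply_eq, smul_eq_mul,
          mul_one, hcC]
        rw [hdiagA a]
        push_cast
        ring
      rw [if_pos rfl, hB]
      conv_lhs => rw [hdiagA a]
      simp only [Complex.norm_real, Real.norm_eq_abs, sq_abs]
      ring
    · have hB : B a b = A a b := by
        rw [hBdef]
        simp [Matrix.one_apply_ne hab]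
      rw [hB, if_neg hab, add_zero]
  -- combine: full A-sum = B-sum + n^2/m
  have keyC : ∑ a, ∑ b, ‖A a b‖ ^ 2 = (∑ a, ∑ b, ‖B a b‖ ^ 2) + (n : ℝ) ^ 2 / m := by
    have : ∑ a, ∑ b, ‖A a b‖ ^ 2
        = ∑ a, ∑ b, (‖B a b‖ ^ 2 + (if a = b then 2 * c * (A a a).re - c ^ 2 else 0)) := by
      exact Finset.sum_congr rfl fun a _ => Finset.sum_congr rfl fun b _ => keyB a b
    rw [this]
    simp only [Finset.sum_add_distrib]
    congr 1
    have h4 : ∀ a : Fin m, ∑ b, (if a = b then 2 * c * (A a a).re - c ^ 2 else 0)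
        = 2 * c * (A a a).re - c ^ 2 := by
      intro a
      simp
    rw [Finset.sum_congr rfl fun a _ => h4 a]
    rw [Finset.sum_sub_distrib, ← Finset.mul_sum, hsumre]
    simp only [Finset.sum_const, Finset.card_univ, Fintype.card_fin, nsmul_eq_mul]
    rw [hcdef]
    field_simp
    ring
  -- diagonal of G
  have hGdiag : ∀ i, ‖G i i‖ ^ 2 = 1 := by
    intro i
    rw [hcol i]
    norm_num
  -- the erased sum
  have keyD : ∑ i, ∑ j ∈ Finset.univ.erase i, ‖G i j‖ ^ 2
      = (∑ a, ∑ b, ‖B a b‖ ^ 2) + (n : ℝ) ^ 2 / m - n := by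
    have : ∀ i : Fin n, ∑ j ∈ Finset.univ.erase i, ‖G i j‖ ^ 2
        = (∑ j, ‖G i j‖ ^ 2) - 1 := by
      intro i
      rw [Finset.sum_erase_eq_sub (Finset.mem_univ i), hGdiag i]
    rw [Finset.sum_congr rfl fun i _ => this i, Finset.sum_sub_distrib, keyA, keyC]
    simp
  have hBnonneg : (0:ℝ) ≤ ∑ a, ∑ b, ‖B a b‖ ^ 2 :=
    Finset.sum_nonneg fun a _ => Finset.sum_nonneg fun b _ => sq_nonneg _
  constructor
  · rw [keyD]; linarith
  · rw [keyD]
    constructor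
    · intro h
      have h0 : ∑ a, ∑ b, ‖B a b‖ ^ 2 = 0 := by linarith
      have h1 := (Finset.sum_eq_zero_iff_of_nonneg
        (fun a _ => Finset.sum_nonneg fun b _ => sq_nonneg (‖B a b‖))).mp h0
      have hB0 : B = 0 := by
        ext a b
        have h2 := (Finset.sum_eq_zero_iff_of_nonneg
          (fun b _ => sq_nonneg (‖B a b‖))).mp (h1 a (Finset.mem_univ a)) b (Finset.mem_univ b)
        have : ‖B a b‖ = 0 := by
          have := sq_eq_zero_iff.mp h2
          exact this
        simpa using norm_eq_zero.mp this
      have : A = ((n:ℂ)/(m:ℂ)) • (1 : Matrix (Fin m) (Fin m) ℂ) := sub_eq_zero.mp hB0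
      exact this
    · intro h
      have hB0 : B = 0 := by rw [hBdef, h]; simp
      rw [hB0]
      simp
end

section
/- For any m-by-n complex matrix F with unit-norm columns, the maximum of |⟨f_i, f_j⟩|² over pairs i < j is at least (n−m)/((n−1)m). -/
open Matrix BigOperators

theorem erasure_welch_stmt3 (m n : ℕ) (hm : 1 ≤ m) (hmn : m ≤ n) (hn : 2 ≤ n)
    (F : Matrix (Fin m) (Fin n) ℂ)
    (hcol : ∀ i, (Fᴴ * F) i i = 1) :
    ∃ i j : Fin n, i < j ∧
      ((n : ℝ) - m) / (((n : ℝ) - 1) * m) ≤ ‖(Fᴴ * F) i j‖ ^ 2 := by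
  set G := Fᴴ * F with hG
  set A := F * Fᴴ with hA
  have hGH : Gᴴ = G := by rw [hG, conjTranspose_mul, conjTranspose_conjTranspose]
  have hAH : Aᴴ = A := by rw [hA, conjTranspose_mul, conjTranspose_conjTranspose]
  have hGsym : ∀ i j, G j i = starRingEnd ℂ (G i j) := by
    intro i j
    have := congrFun (congrFun hGH j) i
    simpa [conjTranspose_apply] using this.symm
  have hAsym : ∀ a b, A b a = starRingEnd ℂ (A a b) := by
    intro a b
    have := congrFun (congrFun hAH b) a
    simpa [conjTranspose_apply] using this.symm
  set S : ℝ := ∑ i : Fin n, ∑ j : Fin n, Complex.normSq (G i j) with hS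
  set T : ℝ := ∑ a : Fin m, ∑ b : Fin m, Complex.normSq (A a b) with hT
  -- trace identities
  have htrG : trace (G * G) = (S : ℂ) := by
    rw [hS]
    push_cast
    simp only [Matrix.trace, Matrix.diag_apply, Matrix.mul_apply]
    refine Finset.sum_congr rfl fun i _ => Finset.sum_congr rfl fun j _ => ?_
    rw [hGsym i j, Complex.mul_conj]
  have htrA : trace (A * A) = (T : ℂ) := by
    rw [hT]
    push_cast
    simp only [Matrix.trace, Matrix.diag_apply, Matrix.mul_apply]
    refine Finset.sum_congr rfl fun a _ => Finset.sum_congr rfl fun b _ => ?_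
    rw [hAsym a b, Complex.mul_conj]
  have hST : S = T := by
    have h : trace (G * G) = trace (A * A) := by
      rw [hG, hA, Matrix.mul_assoc Fᴴ F (Fᴴ * F), trace_mul_comm]
      congr 1
      simp only [Matrix.mul_assoc]
    rw [htrG, htrA] at h
    exact_mod_cast h
  -- diagonal of A
  set r : Fin m → ℝ := fun a => (A a a).re with hr
  have hAdiag : ∀ a, A a a = ((r a : ℝ) : ℂ) := by
    intro a
    have h : A a a = ((∑ k, Complex.normSq (F a k) : ℝ) : ℂ) := by
      simp [hA, Matrix.mul_apply, conjTranspose_apply, Complex.mul_conj]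
    rw [h]
    simp [hr, h]
  have htrAG : trace A = trace G := by rw [hA, hG, trace_mul_comm]
  have h1 : trace G = (n : ℂ) := by
    simp only [Matrix.trace, Matrix.diag_apply]
    simp [hcol]
  have hsum_r : ∑ a, r a = (n : ℝ) := by
    have h2 : trace A = ((∑ a, r a : ℝ) : ℂ) := by
      simp only [Matrix.trace, Matrix.diag_apply]
      push_cast
      exact Finset.sum_congr rfl fun a _ => hAdiag a
    have h3 : ((∑ a, r a : ℝ) : ℂ) = ((n : ℝ) : ℂ) := by
      rw [← h2, htrAG, h1]; push_cast; ring
    exact_mod_cast h3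
  -- T ≥ n^2/m
  have hTdiag : ∑ a, (r a) ^ 2 ≤ T := by
    rw [hT]
    refine Finset.sum_le_sum fun a _ => ?_
    calc r a ^ 2 = Complex.normSq (A a a) := by
          rw [hAdiag a]; simp [Complex.normSq_apply]; ring
    _ ≤ ∑ b, Complex.normSq (A a b) :=
        Finset.single_le_sum (fun b _ => Complex.normSq_nonneg _) (Finset.mem_univ a)
  have hCS : (n : ℝ) ^ 2 ≤ (m : ℝ) * ∑ a, (r a) ^ 2 := by
    have := sq_sum_le_card_mul_sum_sq (s := (Finset.univ : Finset (Fin m))) (f := r)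
    simpa [hsum_r] using this
  have hmpos : (0 : ℝ) < m := by exact_mod_cast hm
  have hTlb : (n : ℝ) ^ 2 / m ≤ T := by
    rw [div_le_iff₀ hmpos]
    nlinarith [hTdiag, hCS]
  -- split S into diag + offdiag
  have hdiagG : ∑ i : Fin n, Complex.normSq (G i i) = (n : ℝ) := by
    have h : ∀ i : Fin n, Complex.normSq (G i i) = 1 := fun i => by rw [hcol i]; simp
    simp [h]
  have hsplit : S = (n : ℝ) + ∑ p ∈ (Finset.univ : Finset (Fin n)).offDiag, Complex.normSq (G p.1 p.2) := by
    have h1 : S = ∑ p ∈ (Finset.univ : Finset (Fin n)) ×ˢ Finset.univ, Complex.normSq (G p.1 p.2) := by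
      rw [Finset.sum_product]
    have h2 : ∑ p ∈ Finset.diag (Finset.univ : Finset (Fin n)), Complex.normSq (G p.1 p.2) = (n : ℝ) := by
      rw [← hdiagG]
      refine Finset.sum_nbij' (fun p => p.1) (fun i => (i, i)) ?_ ?_ ?_ ?_ ?_
      · intro p hp; exact Finset.mem_univ _
      · intro i _; simp [Finset.mem_diag]
      · intro p hp; rw [Finset.mem_diag] at hp; ext <;> simp [hp.2]
      · intro i _; rfl
      · intro p hp; rw [Finset.mem_diag] at hp; simp [← hp.2]
    rw [h1, ← Finset.diag_union_offDiag,
      Finset.sum_union (Finset.disjoint_diag_offDiag _), h2]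
  -- bound off-diagonal sum
  set c : ℝ := ((n : ℝ) - m) / (((n : ℝ) - 1) * m) with hc
  have hn1 : (1 : ℝ) ≤ (n : ℝ) - 1 := by
    have : (2:ℝ) ≤ n := by exact_mod_cast hn
    linarith
  have hoff : ((Finset.univ : Finset (Fin n)).offDiag.card : ℝ) * c ≤
      ∑ p ∈ (Finset.univ : Finset (Fin n)).offDiag, Complex.normSq (G p.1 p.2) := by
    have hcard : (((Finset.univ : Finset (Fin n)).offDiag.card : ℕ) : ℝ) = (n : ℝ) * ((n:ℝ) - 1) := by
      rw [Finset.offDiag_card, Finset.card_univ, Fintype.card_fin,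
        Nat.cast_sub (Nat.le_mul_of_pos_left n (by omega : 0 < n))]
      push_cast; ring
    have hsum_ge : (n : ℝ)^2 / m - n ≤
        ∑ p ∈ (Finset.univ : Finset (Fin n)).offDiag, Complex.normSq (G p.1 p.2) := by
      have h := hTlb
      rw [← hST, hsplit] at h
      linarith
    rw [hcard, hc]
    have heq : (n:ℝ) * ((n:ℝ)-1) * (((n : ℝ) - m) / (((n : ℝ) - 1) * m)) = (n:ℝ)^2/m - n := by
      field_simp
    rw [heq]
    exact hsum_ge
  have hne : ((Finset.univ : Finset (Fin n)).offDiag).Nonempty := by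
    refine ⟨((⟨0, by omega⟩ : Fin n), (⟨1, by omega⟩ : Fin n)), ?_⟩
    simp [Finset.mem_offDiag, Fin.ext_iff]
  obtain ⟨p, hp, hcp⟩ := Finset.exists_le_of_sum_le (f := fun _ => c)
    (g := fun p => Complex.normSq (G p.1 p.2)) hne
    (by rw [Finset.sum_const, nsmul_eq_mul]; exact hoff)
  rw [Finset.mem_offDiag] at hp
  have key : ∀ i j : Fin n, c ≤ Complex.normSq (G i j) → i < j →
      ∃ i j : Fin n, i < j ∧ c ≤ ‖G i j‖ ^ 2 := by
    intro i j h hij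
    exact ⟨i, j, hij, by rw [Complex.sq_norm]; exact h⟩
  rcases lt_or_gt_of_ne hp.2.2 with h | h
  · exact key p.1 p.2 hcp h
  · refine key p.2 p.1 ?_ h
    rw [hGsym p.1 p.2, Complex.normSq_conj]
    exact hcp
end

section
/- For any m-by-n complex matrix F with unit-norm columns, the sum (1/n)·Σ_{i≠j}|⟨f_i,f_j⟩|⁴ is at least x²/(n−1) where x = n/m − 1, with equality if and only if F is an equiangular tight frame. -/
open Matrix BigOperators Finset

lemma cs_eq {ι : Type*} (s : Finset ι) (a : ι → ℝ) (hc : 0 < (s.card : ℝ)) :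
    (∑ p ∈ s, a p) ^ 2 / s.card ≤ ∑ p ∈ s, a p ^ 2 ∧
    ((∑ p ∈ s, a p) ^ 2 / s.card = ∑ p ∈ s, a p ^ 2 ↔
      ∀ p ∈ s, a p = (∑ q ∈ s, a q) / s.card) := by
  have hc' : ((s.card : ℝ)) ≠ 0 := ne_of_gt hc
  set μ : ℝ := (∑ q ∈ s, a q) / s.card with hμ
  have key : ∑ p ∈ s, (a p - μ) ^ 2 = ∑ p ∈ s, a p ^ 2 - (∑ p ∈ s, a p) ^ 2 / s.card := by
    have expand : ∀ p ∈ s, (a p - μ) ^ 2 = a p ^ 2 - 2 * μ * a p + μ ^ 2 := by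
      intros; ring
    rw [Finset.sum_congr rfl expand, Finset.sum_add_distrib, Finset.sum_sub_distrib,
      Finset.sum_const, ← Finset.mul_sum, nsmul_eq_mul, hμ]
    field_simp
    ring
  have hnn : (0:ℝ) ≤ ∑ p ∈ s, (a p - μ) ^ 2 :=
    Finset.sum_nonneg fun p _ => sq_nonneg _
  constructor
  · linarith [key ▸ hnn]
  · constructor
    · intro h
      have h0 : ∑ p ∈ s, (a p - μ) ^ 2 = 0 := by rw [key, h]; ring
      intro p hp
      have := (Finset.sum_eq_zero_iff_of_nonneg
        (fun q _ => sq_nonneg (a q - μ))).mp h0 p hp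
      have := pow_eq_zero_iff (n := 2) (by norm_num) |>.mp this
      linarith [sub_eq_zero.mp this]
    · intro h
      have h0 : ∑ p ∈ s, (a p - μ) ^ 2 = 0 :=
        Finset.sum_eq_zero fun p hp => by rw [h p hp]; ring
      rw [key] at h0
      linarith

theorem erasure_welch_stmt8 (m n : ℕ) (hm : 1 ≤ m) (hmn : m < n)
    (F : Matrix (Fin m) (Fin n) ℂ)
    (hcol : ∀ i, (Fᴴ * F) i i = 1) :
    let x : ℝ := (n : ℝ) / m - 1
    (x ^ 2 / ((n : ℝ) - 1) ≤
      (1 / (n : ℝ)) * ∑ i, ∑ j ∈ Finset.univ.erase i, ‖(Fᴴ * F) i j‖ ^ 4) ∧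
    ((1 / (n : ℝ)) * ∑ i, ∑ j ∈ Finset.univ.erase i, ‖(Fᴴ * F) i j‖ ^ 4 =
        x ^ 2 / ((n : ℝ) - 1) ↔
      (F * Fᴴ = ((n : ℂ) / (m : ℂ)) • (1 : Matrix (Fin m) (Fin m) ℂ) ∧
        ∀ i j, i ≠ j →
          ‖(Fᴴ * F) i j‖ ^ 2 = ((n : ℝ) - m) / (((n : ℝ) - 1) * m))) := by
  intro x
  have hxd : x = (n : ℝ) / m - 1 := rfl
  clear_value x
  -- numeric facts
  have hM0 : (0:ℝ) < m := by exact_mod_cast hm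
  have hn2 : 2 ≤ n := lt_of_le_of_lt hm hmn
  have hN1 : (1:ℝ) < n := by exact_mod_cast hn2
  have hN0 : (0:ℝ) < n := by linarith
  have hMN : (m:ℝ) < n := by exact_mod_cast hmn
  have hN1' : (0:ℝ) < (n:ℝ) - 1 := by linarith
  have hxval : x = ((n:ℝ) - m) / m := by
    rw [hxd]; field_simp
  have hx0 : 0 < x := by rw [hxval]; exact div_pos (by linarith) hM0
  set G := Fᴴ * F with hGdef
  set A := F * Fᴴ with hAdef
  have hGsym : ∀ i j, G j i = (starRingEnd ℂ) (G i j) := by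
    intro i j
    simp only [hGdef, Matrix.mul_apply, Matrix.conjTranspose_apply, map_sum, _root_.map_mul,
      RCLike.star_def, starRingEnd_self_apply]
    exact Finset.sum_congr rfl fun k _ => mul_comm _ _
  have hAsym : ∀ i j, A j i = (starRingEnd ℂ) (A i j) := by
    intro i j
    simp only [hAdef, Matrix.mul_apply, Matrix.conjTranspose_apply, map_sum, _root_.map_mul,
      RCLike.star_def, starRingEnd_self_apply]
    exact Finset.sum_congr rfl fun k _ => mul_comm _ _
  have hmc : ∀ (z : ℂ), z * (starRingEnd ℂ) z = ((‖z‖ ^ 2 : ℝ) : ℂ) := by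
    intro z
    rw [Complex.mul_conj, Complex.normSq_eq_norm_sq]
  have htr : Matrix.trace (G * G) = Matrix.trace (A * A) := by
    rw [hGdef, hAdef]
    have h := Matrix.trace_mul_comm Fᴴ (F * (Fᴴ * F))
    simp only [Matrix.mul_assoc] at h ⊢
    exact h
  have hGG : Matrix.trace (G * G) = ((∑ i, ∑ j, ‖G i j‖ ^ 2 : ℝ) : ℂ) := by
    rw [Matrix.trace, Complex.ofReal_sum]
    refine Finset.sum_congr rfl fun i _ => ?_
    rw [Matrix.diag_apply, Matrix.mul_apply, Complex.ofReal_sum]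
    refine Finset.sum_congr rfl fun j _ => ?_
    rw [hGsym i j, hmc]
  have hAA : Matrix.trace (A * A) = ((∑ i, ∑ k, ‖A i k‖ ^ 2 : ℝ) : ℂ) := by
    rw [Matrix.trace, Complex.ofReal_sum]
    refine Finset.sum_congr rfl fun i _ => ?_
    rw [Matrix.diag_apply, Matrix.mul_apply, Complex.ofReal_sum]
    refine Finset.sum_congr rfl fun k _ => ?_
    rw [hAsym i k, hmc]
  have hEq : (∑ i, ∑ j, ‖G i j‖ ^ 2 : ℝ) = ∑ i, ∑ k, ‖A i k‖ ^ 2 := by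
    have h := htr; rw [hGG, hAA] at h; exact_mod_cast h
  -- diagonal of A
  set d : Fin m → ℝ := fun i => ∑ j, ‖F i j‖ ^ 2 with hddef
  have hAd : ∀ i, A i i = ((d i : ℝ) : ℂ) := by
    intro i
    rw [hAdef, Matrix.mul_apply, hddef]
    rw [Complex.ofReal_sum]
    refine Finset.sum_congr rfl fun j _ => ?_
    rw [Matrix.conjTranspose_apply, RCLike.star_def, hmc]
  have hd_nonneg : ∀ i, 0 ≤ d i := fun i => Finset.sum_nonneg fun j _ => by positivity
  have hd_sum : ∑ i, d i = (n:ℝ) := by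
    have h1 : Matrix.trace A = (n : ℂ) := by
      rw [hAdef, Matrix.trace_mul_comm, ← hGdef, Matrix.trace]
      simp only [Matrix.diag_apply, hcol]
      simp
    have h2 : Matrix.trace A = ((∑ i, d i : ℝ) : ℂ) := by
      rw [Matrix.trace, Complex.ofReal_sum]
      exact Finset.sum_congr rfl fun i _ => by rw [Matrix.diag_apply, hAd]
    rw [h2] at h1
    exact_mod_cast h1
  -- sums
  set S : ℝ := ∑ i, ∑ j ∈ Finset.univ.erase i, ‖G i j‖ ^ 2 with hSdef
  set Q : ℝ := ∑ i, ∑ j ∈ Finset.univ.erase i, ‖G i j‖ ^ 4 with hQdef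
  set R : ℝ := ∑ i, ∑ k ∈ Finset.univ.erase i, ‖A i k‖ ^ 2 with hRdef
  have hR0 : 0 ≤ R := Finset.sum_nonneg fun i _ =>
    Finset.sum_nonneg fun k _ => by positivity
  have hSG : (∑ i, ∑ j, ‖G i j‖ ^ 2 : ℝ) = n + S := by
    have step : ∀ i : Fin n, ∑ j, ‖G i j‖ ^ 2 = 1 + ∑ j ∈ Finset.univ.erase i, ‖G i j‖ ^ 2 := by
      intro i
      rw [← Finset.add_sum_erase Finset.univ _ (Finset.mem_univ i), hcol i]
      norm_num
    rw [Finset.sum_congr rfl fun i _ => step i, Finset.sum_add_distrib,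
      Finset.sum_const, Finset.card_univ, Fintype.card_fin, nsmul_eq_mul, mul_one, hSdef]
  have hSA : (∑ i, ∑ k, ‖A i k‖ ^ 2 : ℝ) = (∑ i, (d i) ^ 2) + R := by
    have step : ∀ i : Fin m, ∑ k, ‖A i k‖ ^ 2 = (d i) ^ 2 + ∑ k ∈ Finset.univ.erase i, ‖A i k‖ ^ 2 := by
      intro i
      rw [← Finset.add_sum_erase Finset.univ _ (Finset.mem_univ i), hAd,
        Complex.norm_real, Real.norm_eq_abs, sq_abs]
    rw [Finset.sum_congr rfl fun i _ => step i, Finset.sum_add_distrib, hRdef]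
  -- Cauchy-Schwarz on the diagonal of A
  have hcard_m : (((Finset.univ : Finset (Fin m)).card : ℕ) : ℝ) = m := by
    rw [Finset.card_univ, Fintype.card_fin]
  have hcm : (0:ℝ) < ((Finset.univ : Finset (Fin m)).card : ℝ) := by
    rw [hcard_m]; exact hM0
  obtain ⟨hd_cs, hd_iff⟩ := cs_eq (Finset.univ : Finset (Fin m)) d hcm
  have hd_lb : (n:ℝ)^2/m ≤ ∑ i, (d i)^2 := by
    rw [hcard_m, hd_sum] at hd_cs
    exact hd_cs
  -- sigma setup
  set T : Finset (Σ _ : Fin n, Fin n) := Finset.univ.sigma (fun i => Finset.univ.erase i)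
    with hTdef
  have hTcard : ((T.card : ℕ) : ℝ) = (n:ℝ) * ((n:ℝ) - 1) := by
    have h1 : T.card = n * (n - 1) := by
      rw [hTdef, Finset.card_sigma]
      simp [Finset.card_erase_of_mem, Finset.card_univ]
    rw [h1]
    push_cast [Nat.cast_sub (by omega : 1 ≤ n)]
    ring
  set a : (Σ _ : Fin n, Fin n) → ℝ := fun p => ‖G p.1 p.2‖ ^ 2 with hadef
  have hS_sig : S = ∑ p ∈ T, a p := by
    rw [hSdef, hTdef, Finset.sum_sigma]
  have hQ_sig : Q = ∑ p ∈ T, (a p) ^ 2 := by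
    rw [hQdef, hTdef, Finset.sum_sigma]
    exact Finset.sum_congr rfl fun i _ => Finset.sum_congr rfl fun j _ => by
      rw [hadef]; ring
  have hcT : (0:ℝ) < ((T.card : ℕ) : ℝ) := by
    rw [hTcard]; exact mul_pos hN0 hN1'
  obtain ⟨hQ_cs, hQ_iff⟩ := cs_eq T a hcT
  clear_value G A d S Q R T a
  -- lower bound on S
  have hnx : (n:ℝ) * x = (n:ℝ)^2/m - n := by rw [hxval]; field_simp
  have hdecomp : (n:ℝ) + S = (∑ i, (d i)^2) + R := by rw [← hSG, hEq, hSA]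
  have hS_lb : (n:ℝ) * x ≤ S := by rw [hnx]; linarith only [hdecomp, hd_lb, hR0]
  have hS0 : (0:ℝ) ≤ S := le_trans (mul_nonneg hN0.le hx0.le) hS_lb
  have hQ_lb : S^2 / ((n:ℝ)*((n:ℝ)-1)) ≤ Q := by
    rw [← hTcard, hS_sig, hQ_sig]
    exact hQ_cs
  constructor
  · -- the inequality
    have h1 : ((n:ℝ)*x)^2 ≤ S^2 := pow_le_pow_left₀ (mul_nonneg hN0.le hx0.le) hS_lb 2
    have h2 : ((n:ℝ)*x)^2/((n:ℝ)*((n:ℝ)-1)) ≤ S^2/((n:ℝ)*((n:ℝ)-1)) := by gcongr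
    have h3 : ((n:ℝ)*x)^2/((n:ℝ)*((n:ℝ)-1)) = (n:ℝ) * (x^2/((n:ℝ)-1)) := by
      field_simp
    have h4 : (n:ℝ) * (x^2/((n:ℝ)-1)) ≤ Q := le_trans (h3 ▸ h2) hQ_lb
    rw [show (1/(n:ℝ))*Q = Q/(n:ℝ) by ring, le_div_iff₀ hN0]
    have h5 : x^2/((n:ℝ)-1)*(n:ℝ) = (n:ℝ) * (x^2/((n:ℝ)-1)) := mul_comm _ _
    linarith only [h4, h5]
  constructor
  · intro h
    have hQval : Q = (n:ℝ) * (x^2/((n:ℝ)-1)) := by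
      rw [← h]; field_simp
    have hSex : S = (n:ℝ)*x := by
      by_contra hne
      have hlt : (n:ℝ)*x < S := lt_of_le_of_ne hS_lb (Ne.symm hne)
      have h1 : ((n:ℝ)*x)^2 < S^2 := by
        have h0 := mul_self_lt_mul_self (mul_nonneg hN0.le hx0.le) hlt
        rw [pow_two, pow_two]; exact h0
      have h2 : S^2 ≤ Q * ((n:ℝ)*((n:ℝ)-1)) :=
        (div_le_iff₀ (mul_pos hN0 hN1')).mp hQ_lb
      have h3 : Q * ((n:ℝ)*((n:ℝ)-1)) = ((n:ℝ)*x)^2 := by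
        rw [hQval]; field_simp
      linarith only [h1, h2, h3]
    have hsum_eq : (∑ i, (d i)^2) + R = (n:ℝ)^2/m := by
      rw [hSex] at hdecomp
      linarith only [hdecomp, hnx]
    have hdsq : ∑ i, (d i)^2 = (n:ℝ)^2/m := by linarith only [hsum_eq, hd_lb, hR0]
    have hRz : R = 0 := by linarith only [hsum_eq, hdsq]
    have hd_all : ∀ i, d i = (n:ℝ)/m := by
      have heq : (∑ p, d p)^2 / (((Finset.univ : Finset (Fin m)).card : ℕ) : ℝ)
          = ∑ p, (d p)^2 := by
        rw [hd_sum, hcard_m, hdsq]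
      intro i
      have h6 := hd_iff.mp heq i (Finset.mem_univ i)
      rw [hd_sum, hcard_m] at h6
      exact h6
    have hAoff : ∀ i k : Fin m, i ≠ k → A i k = 0 := by
      intro i k hik
      have hRz' : ∑ i, ∑ k ∈ Finset.univ.erase i, ‖A i k‖ ^ 2 = 0 := by
        rw [← hRdef]; exact hRz
      have h1 := (Finset.sum_eq_zero_iff_of_nonneg
        (fun p _ => Finset.sum_nonneg fun q _ => by positivity)).mp hRz' i (Finset.mem_univ i)
      have h2 := (Finset.sum_eq_zero_iff_of_nonneg
        (fun q _ => by positivity)).mp h1 k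
        (Finset.mem_erase.mpr ⟨Ne.symm hik, Finset.mem_univ _⟩)
      have h3 := pow_eq_zero_iff (n := 2) (by norm_num) |>.mp h2
      exact norm_eq_zero.mp h3
    refine ⟨?_, ?_⟩
    · ext i k
      by_cases hik : i = k
      · subst hik
        rw [hAd, hd_all i, Matrix.smul_apply, Matrix.one_apply_eq, smul_eq_mul, mul_one]
        push_cast
        ring
      · rw [hAoff i k hik, Matrix.smul_apply, Matrix.one_apply_ne hik, smul_eq_mul, mul_zero]
    · have hQeq_cs : (∑ p ∈ T, a p)^2 / ((T.card : ℕ) : ℝ) = ∑ p ∈ T, (a p)^2 := by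
        rw [← hS_sig, ← hQ_sig, hTcard, hSex, hQval]
        field_simp
      intro i j hij
      have hmem : (⟨i,j⟩ : Σ _ : Fin n, Fin n) ∈ T := by
        rw [hTdef]
        exact Finset.mem_sigma.mpr
          ⟨Finset.mem_univ _, Finset.mem_erase.mpr ⟨Ne.symm hij, Finset.mem_univ _⟩⟩
      have h5 := hQ_iff.mp hQeq_cs ⟨i,j⟩ hmem
      rw [← hS_sig, hSex, hTcard] at h5
      rw [hadef] at h5
      simp only at h5
      have h6 : (n:ℝ)*x/((n:ℝ)*((n:ℝ)-1)) = ((n:ℝ)-m)/(((n:ℝ)-1)*m) := by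
        rw [hxval]; field_simp
      rw [h6] at h5
      exact h5
  · rintro ⟨-, hnorm⟩
    have hc4 : ∀ (i j : Fin n), i ≠ j →
        ‖G i j‖^4 = (((n:ℝ)-m)/(((n:ℝ)-1)*m))^2 := by
      intro i j hij
      rw [show ‖G i j‖^4 = (‖G i j‖^2)^2 by ring, hnorm i j hij]
    have hQcalc : Q = (n:ℝ)*((n:ℝ)-1)*(((n:ℝ)-m)/(((n:ℝ)-1)*m))^2 := by
      rw [hQdef]
      have step : ∀ i : Fin n, ∑ j ∈ Finset.univ.erase i, ‖G i j‖^4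
          = ((n:ℝ)-1)*(((n:ℝ)-m)/(((n:ℝ)-1)*m))^2 := by
        intro i
        rw [Finset.sum_congr rfl
          (fun j hj => hc4 i j (Ne.symm (Finset.mem_erase.mp hj).1)),
          Finset.sum_const, Finset.card_erase_of_mem (Finset.mem_univ i),
          Finset.card_univ, Fintype.card_fin, nsmul_eq_mul]
        push_cast [Nat.cast_sub (by omega : 1 ≤ n)]
        ring
      rw [Finset.sum_congr rfl fun i _ => step i, Finset.sum_const, Finset.card_univ,
        Fintype.card_fin, nsmul_eq_mul]
      ring
    rw [hQcalc, hxval]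
    field_simp
end

section
/- If F is an m-by-n equiangular tight frame (unit-norm columns, FF' = (n/m)I_m, |⟨f_i,f_j⟩|² = (n−m)/((n−1)m) for all i≠j) and P = diag of i.i.d. Bernoulli(p), then (1/n)·E[tr((FPF')²)] = p + p²(n/m − 1) exactly. -/
open Matrix BigOperators Finset

/-- Probability weight of a Bernoulli(p) selection pattern `ε`. -/
noncomputable def berWeight (n : ℕ) (p : ℝ) (ε : Fin n → Bool) : ℝ :=
  ∏ i, if ε i then p else 1 - p

/-- The diagonal 0/1 selection matrix `P` determined by `ε`. -/
noncomputable def selMat (n : ℕ) (ε : Fin n → Bool) : Matrix (Fin n) (Fin n) ℂ :=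
  Matrix.diagonal (fun i => if ε i then (1 : ℂ) else 0)

/-- Expected `d`-th moment `(1/n)·E[tr((FPF')^d)]` of a Bernoulli(p) subframe. -/
noncomputable def expMoment (m n : ℕ) (p : ℝ) (F : Matrix (Fin m) (Fin n) ℂ)
    (d : ℕ) : ℝ :=
  (1 / (n : ℝ)) *
    ∑ ε : Fin n → Bool, berWeight n p ε *
      (Matrix.trace ((F * selMat n ε * Fᴴ) ^ d)).re

lemma sum_prod_bool {n : ℕ} (f : Fin n → Bool → ℝ) :
    ∑ ε : Fin n → Bool, ∏ i, f i (ε i) = ∏ i, (f i true + f i false) := by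
  rw [← Fintype.piFinset_univ, ← Finset.prod_univ_sum]
  simp

lemma ber_exp {n : ℕ} (p : ℝ) (i j : Fin n) :
    ∑ ε : Fin n → Bool, berWeight n p ε *
        ((if ε i then (1:ℝ) else 0) * (if ε j then (1:ℝ) else 0))
      = if i = j then p else p ^ 2 := by
  have key : ∀ ε : Fin n → Bool,
      berWeight n p ε * ((if ε i then (1:ℝ) else 0) * (if ε j then (1:ℝ) else 0))
      = ∏ k, ((if ε k then p else 1 - p) *
          ((if k = i then (if ε k then (1:ℝ) else 0) else 1) *
           (if k = j then (if ε k then (1:ℝ) else 0) else 1))) := by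
    intro ε
    rw [Finset.prod_mul_distrib, Finset.prod_mul_distrib]
    simp [berWeight, Finset.prod_ite_eq']
  simp only [key]
  rw [sum_prod_bool (fun k b => (if b then p else 1 - p) *
          ((if k = i then (if b then (1:ℝ) else 0) else 1) *
           (if k = j then (if b then (1:ℝ) else 0) else 1)))]
  have h2 : ∀ k ∈ (Finset.univ : Finset (Fin n)),
      (fun k (b : Bool) => (if b then p else 1 - p) *
          ((if k = i then (if b then (1:ℝ) else 0) else 1) *
           (if k = j then (if b then (1:ℝ) else 0) else 1))) k true
       + (fun k (b : Bool) => (if b then p else 1 - p) *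
          ((if k = i then (if b then (1:ℝ) else 0) else 1) *
           (if k = j then (if b then (1:ℝ) else 0) else 1))) k false
      = if k = i ∨ k = j then p else 1 := by
    intro k _
    by_cases hki : k = i <;> by_cases hkj : k = j <;> simp [hki, hkj]
  rw [Finset.prod_congr rfl h2]
  by_cases hij : i = j
  · subst hij
    simp only [or_self, if_pos rfl]
    simp [Finset.prod_ite_eq']
  · have h3 : ∀ k ∈ (Finset.univ : Finset (Fin n)),
        (if k = i ∨ k = j then p else 1)
          = (if k ∈ ({i, j} : Finset (Fin n)) then p else 1) := by
      intro k _; simp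
    rw [Finset.prod_congr rfl h3, Finset.prod_ite_mem, Finset.univ_inter,
      Finset.prod_const]
    rw [Finset.card_insert_of_notMem (by simp [hij]), Finset.card_singleton]
    simp [hij]

lemma trace_re_eq {m n : ℕ} (F : Matrix (Fin m) (Fin n) ℂ) (ε : Fin n → Bool) :
    (Matrix.trace ((F * selMat n ε * Fᴴ) ^ 2)).re
      = ∑ i, ∑ j, ((if ε i then (1:ℝ) else 0) * (if ε j then (1:ℝ) else 0))
          * ‖(Fᴴ * F) i j‖ ^ 2 := by
  have herm := Matrix.isHermitian_conjTranspose_mul_self F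
  set G := Fᴴ * F with hGdef
  have hG : ∀ i j, G j i = star (G i j) := by
    intro i j
    conv_lhs => rw [← herm]
    simp [Matrix.conjTranspose_apply]
  have h1 : (F * selMat n ε * Fᴴ) ^ 2
      = F * (selMat n ε * G * selMat n ε * Fᴴ) := by
    rw [pow_two]; simp only [Matrix.mul_assoc, hGdef]
  rw [h1, Matrix.trace_mul_comm]
  have h2 : selMat n ε * G * selMat n ε * Fᴴ * F
      = selMat n ε * G * (selMat n ε * G) := by
    simp only [Matrix.mul_assoc, hGdef]
  rw [h2]
  have hDG : selMat n ε * G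
      = Matrix.of (fun i j => (if ε i then (1:ℂ) else 0) * G i j) := by
    ext i j; simp [selMat, Matrix.diagonal_mul]
  rw [hDG, Matrix.trace]
  simp only [Matrix.diag_apply, Matrix.mul_apply, Matrix.of_apply]
  rw [Complex.re_sum]
  refine Finset.sum_congr rfl fun i _ => ?_
  rw [Complex.re_sum]
  refine Finset.sum_congr rfl fun j _ => ?_
  rw [hG i j]
  by_cases hi : ε i <;> by_cases hj : ε j <;>
    simp [hi, hj, mul_comm, mul_left_comm, Complex.mul_conj, Complex.normSq_eq_norm_sq,
      RCLike.star_def, ← Complex.ofReal_pow]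

theorem erasure_welch_stmt13 (m n : ℕ) (hm : 1 ≤ m) (hmn : m < n)
    (p : ℝ) (hp0 : 0 ≤ p) (hp1 : p ≤ 1)
    (F : Matrix (Fin m) (Fin n) ℂ)
    (hcol : ∀ i, (Fᴴ * F) i i = 1)
    (htight : F * Fᴴ = ((n : ℂ) / (m : ℂ)) • (1 : Matrix (Fin m) (Fin m) ℂ))
    (hang : ∀ i j, i ≠ j →
      ‖(Fᴴ * F) i j‖ ^ 2 = ((n : ℝ) - m) / (((n : ℝ) - 1) * m)) :
    expMoment m n p F 2 = p + p ^ 2 * ((n : ℝ) / m - 1) := by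
  have hm0 : (m : ℝ) ≠ 0 := by positivity
  have hn2 : 2 ≤ n := lt_of_le_of_lt hm hmn
  have hn0 : (n : ℝ) ≠ 0 := by positivity
  have hn1 : (n : ℝ) - 1 ≠ 0 := by
    have : (2 : ℝ) ≤ (n : ℝ) := by exact_mod_cast hn2
    linarith
  set K : ℝ := ((n : ℝ) - m) / (((n : ℝ) - 1) * m) with hK
  unfold expMoment
  simp only [trace_re_eq]
  have hswap : ∑ ε : Fin n → Bool, berWeight n p ε *
        ∑ i, ∑ j, ((if ε i then (1:ℝ) else 0) * (if ε j then (1:ℝ) else 0))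
          * ‖(Fᴴ * F) i j‖ ^ 2
      = ∑ i, ∑ j, (if i = j then p else p ^ 2) * ‖(Fᴴ * F) i j‖ ^ 2 := by
    simp only [Finset.mul_sum]
    rw [Finset.sum_comm]
    refine Finset.sum_congr rfl fun i _ => ?_
    rw [Finset.sum_comm]
    refine Finset.sum_congr rfl fun j _ => ?_
    rw [← ber_exp p i j, Finset.sum_mul]
    refine Finset.sum_congr rfl fun ε _ => ?_
    ring
  rw [hswap]
  have hdiag : ∀ i : Fin n, ‖(Fᴴ * F) i i‖ ^ 2 = 1 := by
    intro i; rw [hcol i]; simp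
  have hrow : ∀ i : Fin n,
      ∑ j, (if i = j then p else p ^ 2) * ‖(Fᴴ * F) i j‖ ^ 2
        = p + ((n : ℝ) - 1) * (p ^ 2 * K) := by
    intro i
    rw [← Finset.add_sum_erase _ _ (Finset.mem_univ i)]
    have h1 : (if i = i then p else p ^ 2) * ‖(Fᴴ * F) i i‖ ^ 2 = p := by
      rw [if_pos rfl, hdiag i, mul_one]
    rw [h1]
    have h2 : ∀ j ∈ Finset.univ.erase i,
        (if i = j then p else p ^ 2) * ‖(Fᴴ * F) i j‖ ^ 2 = p ^ 2 * K := by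
      intro j hj
      have hij : i ≠ j := fun h => (Finset.mem_erase.mp hj).1 h.symm
      rw [if_neg hij, hang i j hij, hK]
    rw [Finset.sum_congr rfl h2, Finset.sum_const, Finset.card_erase_of_mem
      (Finset.mem_univ i), Finset.card_univ, Fintype.card_fin]
    have : ((n - 1 : ℕ) : ℝ) = (n : ℝ) - 1 := by
      rw [Nat.cast_sub (by omega : 1 ≤ n)]; simp
    simp [nsmul_eq_mul, this]
  rw [Finset.sum_congr rfl (fun i _ => hrow i), Finset.sum_const, Finset.card_univ,
    Fintype.card_fin, nsmul_eq_mul]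
  have hKval : ((n : ℝ) - 1) * K = (n : ℝ) / m - 1 := by
    rw [hK]
    field_simp
  rw [show p + ((n : ℝ) - 1) * (p ^ 2 * K) = p + p ^ 2 * (((n : ℝ) - 1) * K) by ring,
    hKval]
  field_simp
end
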